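/- Let $U \subseteq \mathbb{R}^N$ be open and connected, let $\varepsilon_\alpha \in \mathbb{R}$, let $\varphi^{\alpha,i}, P^{ij} : U \to \mathbb{R}$ be $C^1$ functions, and define $b^{ij}_k = \partial P^{ij}/\partial u^k + \sum_{\alpha=1}^L \varepsilon_\alpha \varphi^{\alpha,i} \, \partial \varphi^{\alpha,j}/\partial u^k$. Suppose $g^{ij} : U \to \mathbb{R}$ are $C^1$ functions with $g^{ij} = g^{ji}$ and $\partial g^{ij}/\partial u^k = b^{ij}_k + b^{ji}_k$ for all indices. Then there exist constants $c^{ij} \in \mathbb{R}$ such that $g^{ij} = P^{ij} + P^{ji} + \sum_{\alpha=1}^L \varepsilon_\alpha \varphi^{\alpha,i} \varphi^{\alpha,j} + c^{ij} + c^{ji}$ on all of $U$. -/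

import Mathlib

/-- Partial derivative of `f` in the `k`-th coordinate direction at `x`. -/
noncomputable def pd {N : ℕ} (f : (Fin N → ℝ) → ℝ) (k : Fin N) (x : Fin N → ℝ) : ℝ :=
  fderiv ℝ f x (Pi.single k 1)

/-- A function with vanishing derivative on a connected open set is constant there. -/
lemma const_of_fderiv_zero {N : ℕ} {U : Set (Fin N → ℝ)} (hU : IsOpen U)
    (hconn : IsConnected U) {f : (Fin N → ℝ) → ℝ}
    (hf : ∀ x ∈ U, DifferentiableAt ℝ f x)
    (h0 : ∀ x ∈ U, fderiv ℝ f x = 0) :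
    ∀ x ∈ U, ∀ y ∈ U, f x = f y := by
  haveI : PreconnectedSpace U := Subtype.preconnectedSpace hconn.isPreconnected
  have hloc : IsLocallyConstant (fun z : U => f z) := by
    rw [IsLocallyConstant.iff_exists_open]
    rintro ⟨x, hx⟩
    obtain ⟨ε, hε, hball⟩ := Metric.isOpen_iff.1 hU x hx
    refine ⟨Subtype.val ⁻¹' Metric.ball x ε,
      (Metric.isOpen_ball).preimage continuous_subtype_val,
      Metric.mem_ball_self hε, ?_⟩
    rintro ⟨y, hy⟩ hyb
    have hdiff : DifferentiableOn ℝ f (Metric.ball x ε) := fun z hz =>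
      (hf z (hball hz)).differentiableWithinAt
    have hzero : ∀ z ∈ Metric.ball x ε, fderivWithin ℝ f (Metric.ball x ε) z = 0 := by
      intro z hz
      rw [fderivWithin_of_isOpen Metric.isOpen_ball hz]
      exact h0 z (hball hz)
    exact (convex_ball x ε).is_const_of_fderivWithin_eq_zero hdiff hzero hyb
      (Metric.mem_ball_self hε)
  intro x hx y hy
  exact hloc.apply_eq_of_preconnectedSpace ⟨x, hx⟩ ⟨y, hy⟩

theorem stmt4 (N L : ℕ) (U : Set (Fin N → ℝ)) (hU : IsOpen U) (hconn : IsConnected U)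
    (ε : Fin L → ℝ)
    (φ : Fin L → Fin N → (Fin N → ℝ) → ℝ) (P : Fin N → Fin N → (Fin N → ℝ) → ℝ)
    (hφ : ∀ α i, ContDiffOn ℝ 1 (φ α i) U) (hP : ∀ i j, ContDiffOn ℝ 1 (P i j) U)
    (b : Fin N → Fin N → Fin N → (Fin N → ℝ) → ℝ)
    (hbdef : ∀ i j k, ∀ x ∈ U,
      b i j k x = pd (P i j) k x + ∑ α, ε α * φ α i x * pd (φ α j) k x)
    (g : Fin N → Fin N → (Fin N → ℝ) → ℝ) (hg : ∀ i j, ContDiffOn ℝ 1 (g i j) U)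
    (hgsym : ∀ i j, ∀ x ∈ U, g i j x = g j i x)
    (hgd : ∀ i j k, ∀ x ∈ U, pd (g i j) k x = b i j k x + b j i k x) :
    ∃ c : Matrix (Fin N) (Fin N) ℝ, ∀ i j, ∀ x ∈ U,
      g i j x = P i j x + P j i x + (∑ α, ε α * φ α i x * φ α j x) + c i j + c j i := by
  obtain ⟨x0, hx0⟩ := hconn.nonempty
  -- differentiability of everything at points of U
  have hdφ : ∀ α i, ∀ x ∈ U, DifferentiableAt ℝ (φ α i) x := fun α i x hx =>
    ((hφ α i).contDiffAt (hU.mem_nhds hx)).differentiableAt one_ne_zero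
  have hdP : ∀ i j, ∀ x ∈ U, DifferentiableAt ℝ (P i j) x := fun i j x hx =>
    ((hP i j).contDiffAt (hU.mem_nhds hx)).differentiableAt one_ne_zero
  have hdg : ∀ i j, ∀ x ∈ U, DifferentiableAt ℝ (g i j) x := fun i j x hx =>
    ((hg i j).contDiffAt (hU.mem_nhds hx)).differentiableAt one_ne_zero
  -- the function that should be constant
  set f : Fin N → Fin N → (Fin N → ℝ) → ℝ := fun i j x =>
    g i j x - (P i j x + P j i x + ∑ α, ε α * φ α i x * φ α j x) with hf
  have hfderiv : ∀ i j, ∀ x ∈ U,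
      HasFDerivAt (f i j)
        (fderiv ℝ (g i j) x - (fderiv ℝ (P i j) x + fderiv ℝ (P j i) x +
          ∑ α, ((ε α * φ α i x) • fderiv ℝ (φ α j) x
              + (ε α * φ α j x) • fderiv ℝ (φ α i) x))) x := by
    intro i j x hx
    have hsum : HasFDerivAt (fun y => ∑ α, ε α * φ α i y * φ α j y)
        (∑ α, ((ε α * φ α i x) • fderiv ℝ (φ α j) x
            + (ε α * φ α j x) • fderiv ℝ (φ α i) x)) x := by
      apply HasFDerivAt.fun_sum
      intro α _
      have h1 := ((hdφ α i x hx).hasFDerivAt.const_mul (ε α)).mul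
        (hdφ α j x hx).hasFDerivAt
      convert h1 using 1
      · rfl
      · rfl
      simp [smul_smul]
      module
    exact ((hdg i j x hx).hasFDerivAt).sub
      (((hdP i j x hx).hasFDerivAt.add (hdP j i x hx).hasFDerivAt).add hsum)
  have hdf : ∀ i j, ∀ x ∈ U, DifferentiableAt ℝ (f i j) x := fun i j x hx =>
    (hfderiv i j x hx).differentiableAt
  -- vanishing of the derivative
  have hzero : ∀ i j, ∀ x ∈ U, fderiv ℝ (f i j) x = 0 := by
    intro i j x hx
    rw [(hfderiv i j x hx).fderiv]
    apply ContinuousLinearMap.coe_injective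
    apply Module.Basis.ext (Pi.basisFun ℝ (Fin N))
    intro k
    have hb1 := hbdef i j k x hx
    have hb2 := hbdef j i k x hx
    have hgd' := hgd i j k x hx
    simp only [Pi.basisFun_apply, ContinuousLinearMap.coe_coe, LinearMap.map_zero,
      ContinuousLinearMap.coe_zero, LinearMap.zero_apply]
    simp only [ContinuousLinearMap.sub_apply, ContinuousLinearMap.add_apply,
      ContinuousLinearMap.coe_sum', Finset.sum_apply, ContinuousLinearMap.smul_apply,
      ContinuousLinearMap.coe_smul']
    rw [show (fderiv ℝ (g i j) x) (Pi.single k 1) = pd (g i j) k x from rfl, hgd', hb1, hb2]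
    simp only [pd, smul_eq_mul]
    rw [Finset.sum_add_distrib]
    ring_nf
  have hconst := fun i j => const_of_fderiv_zero hU hconn (hdf i j) (hzero i j)
  -- the constant matrix
  refine ⟨fun i j => f i j x0 / 2, ?_⟩
  intro i j x hx
  have h1 : f i j x = f i j x0 := hconst i j x hx x0 hx0
  have hsymm : f i j x0 = f j i x0 := by
    simp only [hf]
    rw [hgsym i j x0 hx0]
    rw [Finset.sum_congr rfl (fun α _ => by ring : ∀ α ∈ Finset.univ,
      ε α * φ α i x0 * φ α j x0 = ε α * φ α j x0 * φ α i x0)]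
    ring
  have : g i j x = P i j x + P j i x + (∑ α, ε α * φ α i x * φ α j x) + f i j x := by
    simp only [hf]; ring
  rw [this, h1]
  rw [show f i j x0 = f i j x0 / 2 + f j i x0 / 2 by rw [← hsymm]; ring]
  ring
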